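/- arXiv:0805.1964 — 2 statements merged into one kernel-verified Lean document; each statement's English description precedes it below -/
import Mathlib

section
/- The map sending an alternating, 132-avoiding permutation w of length 2n+1 to w' = (w_1 − 1)(w_2 − 1)···(w_{2n} − 1) (deleting the last entry, which equals 1, and decrementing the rest) is a bijection from A_{2n+1}(132) to A_{2n}(132); hence a_{2n}(132) = a_{2n+1}(132). -/
open Equiv

/-- The word `w` contains the pattern `p`: some subsequence of `w` is
order-isomorphic to `p`. -/
def Contains {α β : Type*} [LT α] [LT β] {n k : ℕ} (w : Fin n → α) (p : Fin k → β) : Prop :=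
  ∃ f : Fin k → Fin n, StrictMono f ∧ ∀ i j : Fin k, p i < p j ↔ w (f i) < w (f j)

/-- The pattern 132 (written with 0-indexed values as (0,2,1)). -/
def pat132 : Fin 3 → ℕ := ![0, 2, 1]

/-- `w` avoids the pattern 132. -/
def Avoids132 {n : ℕ} (w : Equiv.Perm (Fin n)) : Prop :=
  ¬ Contains (fun i => w i) pat132

/-- Pattern containment between permutations. -/
def ContainsP {n k : ℕ} (w : Equiv.Perm (Fin n)) (p : Equiv.Perm (Fin k)) : Prop :=
  Contains (fun i => w i) (fun i => p i)

/-- `w` is (up-down) alternating: `w 0 < w 1 > w 2 < w 3 > ⋯` (0-indexed). -/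
def Alternating {m : ℕ} (w : Equiv.Perm (Fin m)) : Prop :=
  ∀ i : ℕ, ∀ h : i + 1 < m,
    (i % 2 = 0 → w ⟨i, by omega⟩ < w ⟨i + 1, h⟩) ∧
    (i % 2 = 1 → w ⟨i + 1, h⟩ < w ⟨i, by omega⟩)

/-- The even-indexed (in 1-indexed terms: `w₂, w₄, …, w₂ₙ`) entries of `w`
are order-isomorphic to `u`. -/
def OrderIsoEven {n : ℕ} (w : Equiv.Perm (Fin (2 * n + 1))) (u : Equiv.Perm (Fin n)) : Prop :=
  ∀ i j : Fin n, u i < u j ↔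
    w ⟨2 * (i : ℕ) + 1, by have := i.isLt; omega⟩ < w ⟨2 * (j : ℕ) + 1, by have := j.isLt; omega⟩

section Aux
variable {n : ℕ}

lemma fin_val_mk {m a : ℕ} (h : a < m) : ((⟨a, h⟩ : Fin m) : ℕ) = a := rfl

lemma contains132_of {m : ℕ} (w : Equiv.Perm (Fin m)) (x0 x1 x2 : Fin m)
    (h01 : x0 < x1) (h12 : x1 < x2) (ha : w x0 < w x2) (hb : w x2 < w x1) :
    Contains (fun i => w i) pat132 := by
  rw [Fin.lt_def] at ha hb
  refine ⟨![x0, x1, x2], fun a b hab => ?_, fun i j => ?_⟩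
  · fin_cases a <;> fin_cases b <;> simp_all <;>
      first | exact h01 | exact h12 | exact h01.trans h12
  · fin_cases i <;> fin_cases j <;> simp [pat132] <;>
      first | (rw [Fin.lt_def]; omega) | (rw [Fin.le_def]; omega)

def DelRel (w : Equiv.Perm (Fin (2 * n + 1))) (w' : Equiv.Perm (Fin (2 * n))) : Prop :=
  ∀ i : Fin (2 * n), (w' i : ℕ) + 1 = (w i.castSucc : ℕ)

lemma rel_last {w : Equiv.Perm (Fin (2 * n + 1))} {w' : Equiv.Perm (Fin (2 * n))}
    (h : DelRel w w') : (w ⟨2 * n, by omega⟩ : ℕ) = 0 := by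
  by_contra hc
  have hwk : w (w.symm 0) = 0 := w.apply_symm_apply 0
  have hwkv : (w (w.symm 0) : ℕ) = 0 := by rw [hwk]; simp
  have hlt : ((w.symm 0 : Fin (2 * n + 1)) : ℕ) < 2 * n := by
    have h1 := (w.symm 0).isLt
    by_contra h2
    have he : w.symm 0 = ⟨2 * n, by omega⟩ := Fin.ext (by simp only [Fin.val_mk]; omega)
    rw [he] at hwkv
    exact hc hwkv
  have hcs : (⟨((w.symm 0 : Fin (2 * n + 1)) : ℕ), hlt⟩ : Fin (2 * n)).castSucc = w.symm 0 :=
    Fin.ext (by simp)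
  have hr := h ⟨((w.symm 0 : Fin (2 * n + 1)) : ℕ), hlt⟩
  rw [hcs, hwkv] at hr
  omega

lemma rel_order {w : Equiv.Perm (Fin (2 * n + 1))} {w' : Equiv.Perm (Fin (2 * n))}
    (h : DelRel w w') (i j : Fin (2 * n)) :
    w' i < w' j ↔ w i.castSucc < w j.castSucc := by
  have hi := h i; have hj := h j
  rw [Fin.lt_def, Fin.lt_def]; omega
lemma rel_order' {w : Equiv.Perm (Fin (2 * n + 1))} {w' : Equiv.Perm (Fin (2 * n))}
    (h : DelRel w w') (a b : ℕ) (ha : a < 2 * n) (hb : b < 2 * n)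
    (ha' : a < 2 * n + 1) (hb' : b < 2 * n + 1) :
    w' ⟨a, ha⟩ < w' ⟨b, hb⟩ ↔ w ⟨a, ha'⟩ < w ⟨b, hb'⟩ := by
  have h1 := h ⟨a, ha⟩
  have h2 := h ⟨b, hb⟩
  rw [show (⟨a, ha⟩ : Fin (2 * n)).castSucc = ⟨a, ha'⟩ from Fin.ext (by simp)] at h1
  rw [show (⟨b, hb⟩ : Fin (2 * n)).castSucc = ⟨b, hb'⟩ from Fin.ext (by simp)] at h2
  rw [Fin.lt_def, Fin.lt_def]
  omega

lemma rel_alt {w : Equiv.Perm (Fin (2 * n + 1))} {w' : Equiv.Perm (Fin (2 * n))}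
    (h : DelRel w w') : Alternating w ↔ Alternating w' := by
  constructor
  · intro ha i hi
    have h1 := ha i (by omega)
    exact ⟨fun hp => (rel_order' h i (i + 1) (by omega) hi (by omega) (by omega)).mpr (h1.1 hp),
      fun hp => (rel_order' h (i + 1) i hi (by omega) (by omega) (by omega)).mpr (h1.2 hp)⟩
  · intro ha i hi
    rcases Nat.lt_or_ge (i + 1) (2 * n) with hi2 | hi2
    · have h1 := ha i hi2
      exact ⟨fun hp => (rel_order' h i (i + 1) (by omega) hi2 (by omega) hi).mp (h1.1 hp),
        fun hp => (rel_order' h (i + 1) i hi2 (by omega) hi (by omega)).mp (h1.2 hp)⟩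
    · have hie : i + 1 = 2 * n := by omega
      have hn : 1 ≤ n := by omega
      constructor
      · intro hp; omega
      · intro hp
        have e2 : (⟨i + 1, hi⟩ : Fin (2 * n + 1)) = ⟨2 * n, by omega⟩ :=
          Fin.ext (by simp only [Fin.val_mk]; omega)
        rw [e2, Fin.lt_def, rel_last h]
        have h2 := h ⟨i, by omega⟩
        rw [show (⟨i, by omega⟩ : Fin (2 * n)).castSucc = ⟨i, by omega⟩ from
          Fin.ext (by simp)] at h2
        omega

lemma rel_avoid {w : Equiv.Perm (Fin (2 * n + 1))} {w' : Equiv.Perm (Fin (2 * n))}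
    (h : DelRel w w') : Avoids132 w ↔ Avoids132 w' := by
  unfold Avoids132
  constructor
  · intro hw hc
    apply hw
    obtain ⟨f, hf, hcmp⟩ := hc
    refine ⟨fun t => (f t).castSucc, fun a b hab => ?_, fun i j => ?_⟩
    · exact Fin.castSucc_lt_castSucc_iff.mpr (hf hab)
    · rw [hcmp i j]
      have h2 := rel_order' h (f i) (f j) (f i).isLt (f j).isLt
        (by have := (f i).isLt; omega) (by have := (f j).isLt; omega)
      rw [show (⟨(f i : ℕ), (f i).isLt⟩ : Fin (2 * n)) = f i from Fin.ext rfl,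
        show (⟨(f j : ℕ), (f j).isLt⟩ : Fin (2 * n)) = f j from Fin.ext rfl] at h2
      rw [h2]
      constructor
      · intro h3
        rwa [show (⟨(f i : ℕ), _⟩ : Fin (2 * n + 1)) = (f i).castSucc from Fin.ext (by simp),
          show (⟨(f j : ℕ), _⟩ : Fin (2 * n + 1)) = (f j).castSucc from Fin.ext (by simp)] at h3
      · intro h3
        rwa [show (⟨(f i : ℕ), _⟩ : Fin (2 * n + 1)) = (f i).castSucc from Fin.ext (by simp),
          show (⟨(f j : ℕ), _⟩ : Fin (2 * n + 1)) = (f j).castSucc from Fin.ext (by simp)]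
  · intro hw hc
    apply hw
    obtain ⟨f, hf, hcmp⟩ := hc
    have hlast := rel_last h
    have hf2 : (f 2 : ℕ) < 2 * n := by
      have h02 : w (f 0) < w (f 2) := (hcmp 0 2).mp (by norm_num [pat132]; decide)
      by_contra hc2
      have he : f 2 = ⟨2 * n, by omega⟩ := Fin.ext (by
        have := (f 2).isLt; simp only [Fin.val_mk]; omega)
      rw [he, Fin.lt_def, hlast] at h02
      omega
    have hft : ∀ t : Fin 3, (f t : ℕ) < 2 * n := by
      intro t
      have h1 : f t ≤ f 2 := hf.monotone (by omega)
      have h2 := Fin.le_def.mp h1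
      omega
    refine ⟨fun t => ⟨(f t : ℕ), hft t⟩, fun a b hab => ?_, fun i j => ?_⟩
    · have h1 := hf hab
      rw [Fin.lt_def] at h1 ⊢
      exact h1
    · rw [hcmp i j]
      have h2 := rel_order' h (f i) (f j) (hft i) (hft j) (f i).isLt (f j).isLt
      rw [show (⟨(f i : ℕ), (f i).isLt⟩ : Fin (2 * n + 1)) = f i from Fin.ext rfl,
        show (⟨(f j : ℕ), (f j).isLt⟩ : Fin (2 * n + 1)) = f j from Fin.ext rfl] at h2
      exact h2.symm

lemma rel_unique_w' {w : Equiv.Perm (Fin (2 * n + 1))} {w1 w2 : Equiv.Perm (Fin (2 * n))}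
    (h1 : DelRel w w1) (h2 : DelRel w w2) : w1 = w2 := by
  apply Equiv.ext
  intro i
  have e1 := h1 i; have e2 := h2 i
  exact Fin.ext (by omega)

lemma rel_unique_w {w1 w2 : Equiv.Perm (Fin (2 * n + 1))} {w' : Equiv.Perm (Fin (2 * n))}
    (h1 : DelRel w1 w') (h2 : DelRel w2 w') : w1 = w2 := by
  apply Equiv.ext
  intro x
  rcases Nat.lt_or_ge (x : ℕ) (2 * n) with hx | hx
  · have e : (⟨(x : ℕ), hx⟩ : Fin (2 * n)).castSucc = x := Fin.ext (by simp)
    have e1 := h1 ⟨(x : ℕ), hx⟩; have e2 := h2 ⟨(x : ℕ), hx⟩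
    rw [e] at e1 e2
    exact Fin.ext (by omega)
  · have e : x = ⟨2 * n, by omega⟩ := Fin.ext (by
      have := x.isLt; simp only [Fin.val_mk]; omega)
    rw [e]
    exact Fin.ext (by rw [rel_last h1, rel_last h2])

lemma last_eq_zero (w : Equiv.Perm (Fin (2 * n + 1))) (halt : Alternating w)
    (hav : Avoids132 w) : (w ⟨2 * n, by omega⟩ : ℕ) = 0 := by
  by_contra hc
  have hwk : (w (w.symm 0) : ℕ) = 0 := by rw [w.apply_symm_apply]; simp
  have hklt : ((w.symm 0 : Fin (2 * n + 1)) : ℕ) < 2 * n := by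
    have h1 := (w.symm 0).isLt
    by_contra h2
    have he : w.symm 0 = ⟨2 * n, by omega⟩ := Fin.ext (by simp only [Fin.val_mk]; omega)
    rw [he] at hwk
    exact hc hwk
  rcases Nat.even_or_odd ((w.symm 0 : Fin (2 * n + 1)) : ℕ) with hpar | hpar
  · -- even: 132 pattern at positions k, k+1, k+2
    obtain ⟨m, hm⟩ := hpar
    have hK2 : ((w.symm 0 : Fin (2 * n + 1)) : ℕ) + 2 ≤ 2 * n := by omega
    have p0 : ((w.symm 0 : Fin (2 * n + 1)) : ℕ) < 2 * n + 1 := by omega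
    have p1 : ((w.symm 0 : Fin (2 * n + 1)) : ℕ) + 1 < 2 * n + 1 := by omega
    have p2 : ((w.symm 0 : Fin (2 * n + 1)) : ℕ) + 2 < 2 * n + 1 := by omega
    have hx0k : (⟨((w.symm 0 : Fin (2 * n + 1)) : ℕ), p0⟩ : Fin (2 * n + 1)) = w.symm 0 :=
      Fin.ext rfl
    have h01 := (halt _ p1).1 (by omega)
    have h21 := (halt _ p2).2 (by omega)
    rw [Fin.lt_def] at h01 h21
    have h0 : (w ⟨_, p0⟩ : ℕ) = 0 := by rw [hx0k]; exact hwk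
    have h2pos : 0 < (w ⟨_, p2⟩ : ℕ) := by
      rcases Nat.eq_zero_or_pos (w ⟨_, p2⟩ : ℕ) with hz | hz
      · exfalso
        have heq : w ⟨_, p2⟩ = w ⟨_, p0⟩ := Fin.ext (by omega)
        have := congrArg Fin.val (w.injective heq)
        simp only [Fin.val_mk] at this
        omega
      · exact hz
    apply hav
    exact contains132_of w ⟨_, p0⟩ ⟨_, p1⟩ ⟨_, p2⟩ (Fin.mk_lt_mk.mpr (by omega))
      (Fin.mk_lt_mk.mpr (by omega)) (Fin.lt_def.mpr (by omega)) (Fin.lt_def.mpr h21)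
  · -- odd: w(k-1) < w k = 0
    obtain ⟨m, hm⟩ := hpar
    have p1 : m * 2 + 1 < 2 * n + 1 := by omega
    have h1 := (halt (m * 2) p1).1 (by omega)
    have e : (⟨m * 2 + 1, p1⟩ : Fin (2 * n + 1)) = w.symm 0 := Fin.ext (by
      simp only [Fin.val_mk]; omega)
    rw [e, Fin.lt_def, hwk] at h1
    omega

noncomputable def down (w : Equiv.Perm (Fin (2 * n + 1))) (h : (w ⟨2 * n, by omega⟩ : ℕ) = 0) :
    Equiv.Perm (Fin (2 * n)) :=
  Equiv.ofBijective
    (fun i => (⟨(w i.castSucc : ℕ) - 1, by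
      have h1 : (w i.castSucc : ℕ) ≠ 0 := by
        intro hc
        have heq : w i.castSucc = w ⟨2 * n, by omega⟩ := Fin.ext (by omega)
        have := congrArg Fin.val (w.injective heq)
        have hl := i.isLt
        simp only [Fin.coe_castSucc, Fin.val_mk] at this
        omega
      have h2 := (w i.castSucc).isLt
      omega⟩ : Fin (2 * n)))
    (Finite.injective_iff_bijective.mp (by
      intro a b hab
      have hne : ∀ c : Fin (2 * n), (w c.castSucc : ℕ) ≠ 0 := by
        intro c hcz
        have heq : w c.castSucc = w ⟨2 * n, by omega⟩ := Fin.ext (by omega)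
        have := congrArg Fin.val (w.injective heq)
        have hl := c.isLt
        simp only [Fin.coe_castSucc, Fin.val_mk] at this
        omega
      have hv := congrArg Fin.val hab
      simp only [Fin.val_mk] at hv
      have ha' := hne a; have hb' := hne b
      have heq : w a.castSucc = w b.castSucc := Fin.ext (by omega)
      have := congrArg Fin.val (w.injective heq)
      simp only [Fin.coe_castSucc] at this
      exact Fin.ext this))

lemma down_rel (w : Equiv.Perm (Fin (2 * n + 1))) (h : (w ⟨2 * n, by omega⟩ : ℕ) = 0) :
    DelRel w (down w h) := by
  intro i
  have h1 : (w i.castSucc : ℕ) ≠ 0 := by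
    intro hc
    have heq : w i.castSucc = w ⟨2 * n, by omega⟩ := Fin.ext (by omega)
    have := congrArg Fin.val (w.injective heq)
    have hl := i.isLt
    simp only [Fin.coe_castSucc, Fin.val_mk] at this
    omega
  show ((w i.castSucc : ℕ) - 1) + 1 = _
  omega

def upFun (w' : Equiv.Perm (Fin (2 * n))) (i : Fin (2 * n + 1)) : Fin (2 * n + 1) :=
  if h : (i : ℕ) < 2 * n then
    ⟨(w' ⟨(i : ℕ), h⟩ : ℕ) + 1, by have := (w' ⟨(i : ℕ), h⟩).isLt; omega⟩
  else ⟨0, by omega⟩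

lemma upFun_val_pos (w' : Equiv.Perm (Fin (2 * n))) (x : Fin (2 * n + 1))
    (hx : (x : ℕ) < 2 * n) : (upFun w' x : ℕ) = (w' ⟨(x : ℕ), hx⟩ : ℕ) + 1 := by
  unfold upFun
  rw [dif_pos hx]

lemma upFun_val_neg (w' : Equiv.Perm (Fin (2 * n))) (x : Fin (2 * n + 1))
    (hx : ¬ (x : ℕ) < 2 * n) : (upFun w' x : ℕ) = 0 := by
  unfold upFun
  rw [dif_neg hx]

noncomputable def up (w' : Equiv.Perm (Fin (2 * n))) : Equiv.Perm (Fin (2 * n + 1)) :=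
  Equiv.ofBijective (upFun w')
    (Finite.injective_iff_bijective.mp (by
      intro a b hab
      have hv := congrArg Fin.val hab
      by_cases ha : (a : ℕ) < 2 * n <;> by_cases hb : (b : ℕ) < 2 * n
      · rw [upFun_val_pos w' a ha, upFun_val_pos w' b hb] at hv
        have heq : w' ⟨(a : ℕ), ha⟩ = w' ⟨(b : ℕ), hb⟩ := Fin.ext (by omega)
        have := congrArg Fin.val (w'.injective heq)
        simp only [Fin.val_mk] at this
        exact Fin.ext this
      · rw [upFun_val_pos w' a ha, upFun_val_neg w' b hb] at hv
        omega
      · rw [upFun_val_neg w' a ha, upFun_val_pos w' b hb] at hv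
        omega
      · have := a.isLt; have := b.isLt
        exact Fin.ext (by omega)))

lemma up_rel (w' : Equiv.Perm (Fin (2 * n))) : DelRel (up w') w' := by
  intro i
  have h1 : (up w') i.castSucc = upFun w' i.castSucc := rfl
  have h2 := upFun_val_pos w' i.castSucc (by simpa using i.isLt)
  rw [h1, h2]
  have e : (⟨((i.castSucc : Fin (2 * n + 1)) : ℕ), by simpa using i.isLt⟩ : Fin (2 * n)) = i :=
    Fin.ext (by simp)
  rw [e]

end Aux


/-- deleting the final entry (which is the minimum) of
`w ∈ A_{2n+1}(132)` and decrementing gives a bijection onto `A_{2n}(132)`;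
hence `a_{2n}(132) = a_{2n+1}(132)`. -/
theorem stmt18 (n : ℕ) :
    (∀ w : Equiv.Perm (Fin (2 * n + 1)), Alternating w → Avoids132 w →
      ∃! w' : Equiv.Perm (Fin (2 * n)),
        (Alternating w' ∧ Avoids132 w') ∧
          ∀ i : Fin (2 * n), (w' i : ℕ) + 1 = (w i.castSucc : ℕ)) ∧
    (∀ w' : Equiv.Perm (Fin (2 * n)), Alternating w' → Avoids132 w' →
      ∃! w : Equiv.Perm (Fin (2 * n + 1)),
        (Alternating w ∧ Avoids132 w) ∧
          ∀ i : Fin (2 * n), (w' i : ℕ) + 1 = (w i.castSucc : ℕ)) ∧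
    Nat.card {w : Equiv.Perm (Fin (2 * n)) // Alternating w ∧ Avoids132 w} =
      Nat.card {w : Equiv.Perm (Fin (2 * n + 1)) //
        Alternating w ∧ Avoids132 w} := by
  refine ⟨?_, ?_, ?_⟩
  · intro w halt hav
    have h0 := last_eq_zero w halt hav
    have hr := down_rel w h0
    exact ⟨down w h0,
      ⟨⟨(rel_alt hr).mp halt, (rel_avoid hr).mp hav⟩, fun i => hr i⟩,
      fun y hy => rel_unique_w' (fun i => hy.2 i) hr⟩
  · intro w' halt' hav'
    have hr := up_rel w'
    exact ⟨up w',
      ⟨⟨(rel_alt hr).mpr halt', (rel_avoid hr).mpr hav'⟩, fun i => hr i⟩,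
      fun y hy => rel_unique_w (fun i => hy.2 i) hr⟩
  · apply Nat.card_congr
    refine ⟨fun p => ⟨up p.1, (rel_alt (up_rel p.1)).mpr p.2.1, (rel_avoid (up_rel p.1)).mpr p.2.2⟩,
      fun q => ⟨down q.1 (last_eq_zero q.1 q.2.1 q.2.2),
        (rel_alt (down_rel q.1 (last_eq_zero q.1 q.2.1 q.2.2))).mp q.2.1,
        (rel_avoid (down_rel q.1 (last_eq_zero q.1 q.2.1 q.2.2))).mp q.2.2⟩,
      ?_, ?_⟩
    · intro p
      apply Subtype.ext
      dsimp only
      exact rel_unique_w' (down_rel _ _) (up_rel p.1)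
    · intro q
      apply Subtype.ext
      dsimp only
      exact rel_unique_w (up_rel _) (down_rel q.1 (last_eq_zero q.1 q.2.1 q.2.2))
end

section
/- Let w ∈ A_{2n+1}(132) and let w' ∈ A_{2n}(132) be obtained by deleting the final entry (which is 1) and decrementing all other entries. If p is a pattern ending in its minimum entry 1 and p' is obtained from p by deleting that final 1 and decrementing, then w avoids p iff w' avoids p'; if p does not end in 1, then w avoids p iff w' avoids p. Hence a_{2n+1}(132, p_1,...,p_i, q_1,...,q_j) = a_{2n}(132, p_1',...,p_i', q_1,...,q_j) for patterns p_1,...,p_i ending in 1 and q_1,...,q_j not ending in 1. -/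
open Equiv

namespace S19

def Rel {m : ℕ} (P : Equiv.Perm (Fin (m+1))) (P' : Equiv.Perm (Fin m)) : Prop :=
  ∀ i : Fin m, (P' i : ℕ) + 1 = (P i.castSucc : ℕ)
variable {m : ℕ} {P : Equiv.Perm (Fin (m+1))} {P' : Equiv.Perm (Fin m)}
lemma rel_apply (h : Rel P P') (x : Fin (m+1)) (hx : (x : ℕ) < m) :
    (P' ⟨x, hx⟩ : ℕ) + 1 = (P x : ℕ) := by
  have := h ⟨x, hx⟩
  rwa [show ((⟨(x:ℕ), hx⟩ : Fin m)).castSucc = x from Fin.ext rfl] at this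
lemma rel_last (h : Rel P P') : (P (Fin.last m) : ℕ) = 0 := by
  by_contra hne
  obtain ⟨j, hj⟩ := P.surjective 0
  have hjne : (j : ℕ) ≠ m := by
    intro e
    exact hne (by rw [show Fin.last m = j from Fin.ext e.symm, hj]; rfl)
  have hjlt : (j : ℕ) < m := by have := j.isLt; omega
  have := rel_apply h j hjlt
  rw [hj] at this
  simp at this

variable {N : ℕ} {w : Equiv.Perm (Fin (N+1))} {w' : Equiv.Perm (Fin N)}

/-- q ending not in min: containment transfers. -/
lemma contains_q_iff (hrel : Rel w w') {l : ℕ} (q : Equiv.Perm (Fin (l+1)))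
    (hq : q (Fin.last l) ≠ 0) : ContainsP w q ↔ ContainsP w' q := by
  unfold ContainsP Contains
  constructor
  · rintro ⟨f, hf, hiso⟩
    dsimp only at hiso
    have hne : ∀ i, (f i : ℕ) < N := by
      intro i
      have h2 : (f i : ℕ) ≤ (f (Fin.last l) : ℕ) := hf.monotone (Fin.le_last i)
      have h3 : (f (Fin.last l) : ℕ) ≠ N := by
        intro e
        obtain ⟨i0, hi0⟩ := q.surjective 0
        have hlt : q i0 < q (Fin.last l) := by
          rw [hi0, Fin.lt_def]
          have : (q (Fin.last l) : ℕ) ≠ 0 := fun hh => hq (Fin.ext hh)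
          simp only [Fin.val_zero]; omega
        have h4 := (hiso i0 (Fin.last l)).mp hlt
        have h0 := rel_last hrel
        rw [show f (Fin.last l) = Fin.last N from Fin.ext e] at h4
        rw [Fin.lt_def] at h4
        omega
      have := (f (Fin.last l)).isLt; omega
    refine ⟨fun i => ⟨f i, hne i⟩, ?_, ?_⟩
    · intro i j hij
      have := hf hij
      rw [Fin.lt_def] at this ⊢
      exact this
    · intro i j
      dsimp only
      rw [hiso i j]
      have h1 := rel_apply hrel (f i) (hne i)
      have h2 := rel_apply hrel (f j) (hne j)
      simp only [Fin.lt_def]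
      omega
  · rintro ⟨f, hf, hiso⟩
    dsimp only at hiso
    refine ⟨fun i => (f i).castSucc, ?_, ?_⟩
    · intro i j hij
      have := hf hij
      rw [Fin.lt_def] at this ⊢
      simpa using this
    · intro i j
      dsimp only
      rw [hiso i j]
      have h1 := hrel (f i)
      have h2 := hrel (f j)
      simp only [Fin.lt_def]
      omega

/-- p ending in min: containment of p in w iff containment of p' in w'. -/
lemma contains_p_iff (hrel : Rel w w') {k : ℕ} (p : Equiv.Perm (Fin (k+1)))
    (hp : p (Fin.last k) = 0) (p' : Equiv.Perm (Fin k)) (hp' : Rel p p') :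
    ContainsP w p ↔ ContainsP w' p' := by
  unfold ContainsP Contains
  constructor
  · rintro ⟨f, hf, hiso⟩
    dsimp only at hiso
    have hne : ∀ i : Fin k, (f i.castSucc : ℕ) < N := by
      intro i
      have h1 : f i.castSucc < f (Fin.last k) := hf (Fin.castSucc_lt_last i)
      have h2 := (f (Fin.last k)).isLt
      rw [Fin.lt_def] at h1
      omega
    refine ⟨fun i => ⟨f i.castSucc, hne i⟩, ?_, ?_⟩
    · intro i j hij
      have : f i.castSucc < f j.castSucc := hf (by rw [Fin.lt_def] at hij ⊢; simpa using hij)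
      rw [Fin.lt_def] at this ⊢
      exact this
    · intro i j
      dsimp only
      have h3 := hiso i.castSucc j.castSucc
      have h1 := rel_apply hrel (f i.castSucc) (hne i)
      have h2 := rel_apply hrel (f j.castSucc) (hne j)
      have h4 := hp' i
      have h5 := hp' j
      rw [Fin.lt_def, Fin.lt_def] at h3
      simp only [Fin.lt_def]
      omega
  · rintro ⟨f, hf, hiso⟩
    dsimp only at hiso
    refine ⟨fun i => if h : (i : ℕ) < k then (f ⟨i, h⟩).castSucc else Fin.last N, ?_, ?_⟩
    · intro i j hij
      rw [Fin.lt_def] at hij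
      by_cases hi : (i : ℕ) < k <;> by_cases hj : (j : ℕ) < k
      · simp only [dif_pos hi, dif_pos hj]
        have : f ⟨i, hi⟩ < f ⟨j, hj⟩ := hf (by rw [Fin.lt_def]; exact hij)
        rw [Fin.lt_def] at this ⊢
        simpa using this
      · simp only [dif_pos hi, dif_neg hj]
        rw [Fin.lt_def]
        have := (f ⟨i, hi⟩).isLt
        simp only [Fin.coe_castSucc, Fin.val_last]
        omega
      · have := i.isLt; have := j.isLt; omega
      · have := i.isLt; have := j.isLt; omega
    · intro i j
      dsimp only
      have hlast : (w (Fin.last N) : ℕ) = 0 := rel_last hrel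
      have hplast : (p (Fin.last k) : ℕ) = 0 := by rw [hp]; rfl
      by_cases hi : (i : ℕ) < k <;> by_cases hj : (j : ℕ) < k
      · simp only [dif_pos hi, dif_pos hj]
        have h3 := hiso ⟨i, hi⟩ ⟨j, hj⟩
        have h1 := hrel (f ⟨i, hi⟩)
        have h2 := hrel (f ⟨j, hj⟩)
        have h4 : (p' ⟨i, hi⟩ : ℕ) + 1 = (p i : ℕ) := rel_apply hp' i hi
        have h5 : (p' ⟨j, hj⟩ : ℕ) + 1 = (p j : ℕ) := rel_apply hp' j hj
        rw [Fin.lt_def, Fin.lt_def] at h3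
        simp only [Fin.lt_def]
        omega
      · -- j is the last index
        have hjl : j = Fin.last k := Fin.ext (by have := j.isLt; simp only [Fin.val_last]; omega)
        simp only [dif_pos hi, dif_neg hj]
        have h4 : (p' ⟨i, hi⟩ : ℕ) + 1 = (p i : ℕ) := rel_apply hp' i hi
        have h1 := hrel (f ⟨i, hi⟩)
        subst hjl
        simp only [Fin.lt_def, hplast, hlast]
        omega
      · have hil : i = Fin.last k := Fin.ext (by have := i.isLt; simp only [Fin.val_last]; omega)
        simp only [dif_neg hi, dif_pos hj]
        have h5 : (p' ⟨j, hj⟩ : ℕ) + 1 = (p j : ℕ) := rel_apply hp' j hj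
        have h2 := hrel (f ⟨j, hj⟩)
        subst hil
        simp only [Fin.lt_def, hplast, hlast]
        omega
      · have hil : i = Fin.last k := Fin.ext (by have := i.isLt; simp only [Fin.val_last]; omega)
        have hjl : j = Fin.last k := Fin.ext (by have := j.isLt; simp only [Fin.val_last]; omega)
        subst hil; subst hjl
        simp only [dif_neg hi, Fin.lt_def]
        omega

/-- 132-avoidance transfers. -/
lemma avoids132_iff (hrel : Rel w w') : Avoids132 w ↔ Avoids132 w' := by
  unfold Avoids132 Contains
  constructor
  · intro h hc
    apply h
    obtain ⟨f, hf, hiso⟩ := hc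
    dsimp only at hiso
    refine ⟨fun i => (f i).castSucc, ?_, ?_⟩
    · intro i j hij
      have := hf hij
      rw [Fin.lt_def] at this ⊢
      simpa using this
    · intro i j
      dsimp only
      rw [hiso i j]
      have h1 := hrel (f i)
      have h2 := hrel (f j)
      simp only [Fin.lt_def]
      omega
  · intro h hc
    apply h
    obtain ⟨f, hf, hiso⟩ := hc
    dsimp only at hiso
    have hne : ∀ i, (f i : ℕ) < N := by
      intro i
      have h2 : (f i : ℕ) ≤ (f 2 : ℕ) := hf.monotone (by
        rw [Fin.le_def]; have := i.isLt; omega)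
      have h3 : (f 2 : ℕ) ≠ N := by
        intro e
        have h4 := (hiso 0 2).mp (by simp [pat132])
        rw [show f 2 = Fin.last N from Fin.ext e] at h4
        have h0 := rel_last hrel
        rw [Fin.lt_def] at h4
        omega
      have := (f 2).isLt; omega
    refine ⟨fun i => ⟨f i, hne i⟩, ?_, ?_⟩
    · intro i j hij
      have := hf hij
      rw [Fin.lt_def] at this ⊢
      exact this
    · intro i j
      dsimp only
      rw [hiso i j]
      have h1 := rel_apply hrel (f i) (hne i)
      have h2 := rel_apply hrel (f j) (hne j)
      simp only [Fin.lt_def]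
      omega

lemma rel_apply' (h : Rel P P') (a : ℕ) (ha : a < m) (ha' : a < m + 1) :
    (P' ⟨a, ha⟩ : ℕ) + 1 = (P ⟨a, ha'⟩ : ℕ) := rel_apply h ⟨a, ha'⟩ ha

-- alternation transfer (needs even length below)
lemma alt_iff {n : ℕ} {w : Equiv.Perm (Fin (2*n+1))} {w' : Equiv.Perm (Fin (2*n))}
    (hrel : Rel w w') : Alternating w ↔ Alternating w' := by
  constructor
  · intro ha i h
    have h2 : i + 1 < 2*n + 1 := by omega
    have e1 := rel_apply' hrel i (by omega) (by omega)
    have e2 := rel_apply' hrel (i+1) h h2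
    have h3 := ha i h2
    refine ⟨fun hp => ?_, fun hp => ?_⟩
    · have := h3.1 hp
      rw [Fin.lt_def] at this ⊢
      omega
    · have := h3.2 hp
      rw [Fin.lt_def] at this ⊢
      omega
  · intro ha i h
    by_cases hc : i + 1 < 2*n
    · have e1 := rel_apply' hrel i (by omega) (by omega)
      have e2 := rel_apply' hrel (i+1) hc h
      have h3 := ha i hc
      refine ⟨fun hp => ?_, fun hp => ?_⟩
      · have := h3.1 hp
        rw [Fin.lt_def] at this ⊢
        omega
      · have := h3.2 hp
        rw [Fin.lt_def] at this ⊢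
        omega
    · -- i + 1 = 2*n, and n ≥ 1, i odd
      have hi : i + 1 = 2*n := by omega
      have hlast : (w (⟨i+1, h⟩ : Fin (2*n+1)) : ℕ) = 0 := by
        rw [show (⟨i+1, h⟩ : Fin (2*n+1)) = Fin.last (2*n) from Fin.ext (by
          simp only [Fin.val_last]; omega)]
        exact rel_last hrel
      have e1 := rel_apply' hrel i (by omega) (by omega)
      refine ⟨fun hp => absurd hp (by omega), fun hp => ?_⟩
      rw [Fin.lt_def]
      omega

lemma alt_avoid_last {n : ℕ} (v : Equiv.Perm (Fin (2*n+1)))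
    (ha : Alternating v) (hav : Avoids132 v) : (v (Fin.last (2*n)) : ℕ) = 0 := by
  by_contra hne
  obtain ⟨j, hj⟩ := v.surjective 0
  have hjv : (v j : ℕ) = 0 := by rw [hj]; rfl
  have hjne : (j : ℕ) ≠ 2*n := by
    intro e
    rw [show Fin.last (2*n) = j from Fin.ext e.symm] at hne
    exact hne hjv
  have hjlt : (j : ℕ) < 2*n := by have := j.isLt; omega
  rcases Nat.even_or_odd (j : ℕ) with he | ho
  · obtain ⟨t, ht⟩ := he
    have hn : 0 < n := by omega
    have hj2 : (j : ℕ) + 1 + 1 < 2*n + 1 := by omega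
    have ha0 : (v (⟨(j:ℕ), by omega⟩ : Fin (2*n+1)) : ℕ) = 0 := by
      rw [show (⟨(j:ℕ), by omega⟩ : Fin (2*n+1)) = j from Fin.ext rfl]; exact hjv
    have hbc : (v (⟨(j:ℕ)+2, by omega⟩ : Fin (2*n+1)) : ℕ) <
        (v (⟨(j:ℕ)+1, by omega⟩ : Fin (2*n+1)) : ℕ) := by
      have := (ha ((j:ℕ)+1) hj2).2 (by omega)
      rw [Fin.lt_def] at this
      exact this
    have hc0 : (v (⟨(j:ℕ)+2, by omega⟩ : Fin (2*n+1)) : ℕ) ≠ 0 := by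
      intro h'
      have he2 : (⟨(j:ℕ)+2, by omega⟩ : Fin (2*n+1)) = j :=
        v.injective (Fin.ext (by rw [h', hjv]))
      have := congrArg Fin.val he2
      simp at this
    have hbc : (v (⟨(j:ℕ)+2, by omega⟩ : Fin (2*n+1)) : ℕ) <
        (v (⟨(j:ℕ)+1, by omega⟩ : Fin (2*n+1)) : ℕ) := by
      have := (ha ((j:ℕ)+1) hj2).2 (by omega)
      rw [Fin.lt_def] at this
      exact this
    apply hav
    refine ⟨fun t : Fin 3 => ⟨(j:ℕ) + (t:ℕ), by have := t.isLt; omega⟩, ?_, ?_⟩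
    · intro a b hab
      rw [Fin.lt_def] at hab
      rw [Fin.mk_lt_mk]
      omega
    · intro a b
      have hc0' : 0 < (v (⟨(j:ℕ)+2, by omega⟩ : Fin (2*n+1)) : ℕ) := Nat.pos_of_ne_zero hc0
      fin_cases a <;> fin_cases b <;>
        simp only [pat132, Fin.lt_def] <;> norm_num <;> omega
  · obtain ⟨t, ht⟩ := ho
    have h1 := (ha ((j:ℕ)-1) (by omega)).1 (by omega)
    rw [show (⟨(j:ℕ)-1+1, by omega⟩ : Fin (2*n+1)) = j from
      Fin.ext (show (j:ℕ)-1+1 = (j:ℕ) by omega)] at h1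
    rw [Fin.lt_def] at h1
    omega
noncomputable def extP {N : ℕ} (u : Equiv.Perm (Fin N)) : Equiv.Perm (Fin (N+1)) :=
  Equiv.ofBijective (fun x => Fin.lastCases 0 (fun i => (u i).succ) x)
    (Finite.injective_iff_bijective.mp (by
      intro a b hab
      induction a using Fin.lastCases with
      | last =>
        induction b using Fin.lastCases with
        | last => rfl
        | cast j =>
          simp only [Fin.lastCases_last, Fin.lastCases_castSucc] at hab
          exact absurd hab.symm (Fin.succ_ne_zero _)
      | cast i =>
        induction b using Fin.lastCases with
        | last =>
          simp only [Fin.lastCases_last, Fin.lastCases_castSucc] at hab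
          exact absurd hab (Fin.succ_ne_zero _)
        | cast j =>
          simp only [Fin.lastCases_castSucc] at hab
          rw [u.injective (Fin.succ_injective _ hab)]))

lemma extP_rel {N : ℕ} (u : Equiv.Perm (Fin N)) : Rel (extP u) u := by
  intro i
  have e : extP u i.castSucc = (u i).succ := by
    show (Fin.lastCases 0 (fun i => (u i).succ) i.castSucc : Fin (N+1)) = _
    exact Fin.lastCases_castSucc ..
  rw [e, Fin.val_succ]

lemma castSucc_val_ne {N : ℕ} (v : Equiv.Perm (Fin (N+1)))
    (h0 : (v (Fin.last N) : ℕ) = 0) (i : Fin N) : (v i.castSucc : ℕ) ≠ 0 := by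
  intro e
  have h1 : i.castSucc = Fin.last N := v.injective (Fin.ext (by rw [e, h0]))
  exact absurd h1 (Fin.castSucc_lt_last i).ne

noncomputable def restr {N : ℕ} (v : Equiv.Perm (Fin (N+1))) (h0 : (v (Fin.last N) : ℕ) = 0) :
    Equiv.Perm (Fin N) :=
  Equiv.ofBijective (fun i => ⟨(v i.castSucc : ℕ) - 1, by
      have := (v i.castSucc).isLt
      have := castSucc_val_ne v h0 i
      omega⟩)
    (Finite.injective_iff_bijective.mp (by
      intro a b hab
      have ha := castSucc_val_ne v h0 a
      have hb := castSucc_val_ne v h0 b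
      simp only [Fin.mk.injEq] at hab
      have h2 : v a.castSucc = v b.castSucc := Fin.ext (by omega)
      exact Fin.castSucc_injective N (v.injective h2)))

lemma restr_rel {N : ℕ} (v : Equiv.Perm (Fin (N+1))) (h0 : (v (Fin.last N) : ℕ) = 0) :
    Rel v (restr v h0) := by
  intro i
  have e : (restr v h0 i : ℕ) = (v i.castSucc : ℕ) - 1 := rfl
  have := castSucc_val_ne v h0 i
  rw [e]
  omega

lemma rel_right_unique {m : ℕ} {P : Equiv.Perm (Fin (m+1))} {P1' P2' : Equiv.Perm (Fin m)}
    (h1 : Rel P P1') (h2 : Rel P P2') : P1' = P2' :=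
  Equiv.ext fun i => Fin.ext (by have := h1 i; have := h2 i; omega)

lemma rel_left_unique {m : ℕ} {P1 P2 : Equiv.Perm (Fin (m+1))} {P' : Equiv.Perm (Fin m)}
    (h1 : Rel P1 P') (h2 : Rel P2 P') : P1 = P2 := by
  apply Equiv.ext
  intro i
  induction i using Fin.lastCases with
  | last => exact Fin.ext (by rw [rel_last h1, rel_last h2])
  | cast i => exact Fin.ext (by have := h1 i; have := h2 i; omega)

end S19

/-- with `w' ∈ A_{2n}(132)` obtained from `w ∈ A_{2n+1}(132)` by
deleting the final entry (the minimum) and decrementing: if `p` ends in its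
minimum and `p'` is obtained from `p` likewise, then `w` avoids `p` iff `w'`
avoids `p'`; if `q` does not end in its minimum, `w` avoids `q` iff `w'`
avoids `q`. Hence
`a_{2n+1}(132, p₁,…,p_i, q₁,…,q_j) = a_{2n}(132, p₁',…,p_i', q₁,…,q_j)`. -/
theorem stmt19 (n : ℕ)
    (w : Equiv.Perm (Fin (2 * n + 1))) (hw : Alternating w ∧ Avoids132 w)
    (w' : Equiv.Perm (Fin (2 * n))) (hw' : Alternating w' ∧ Avoids132 w')
    (hrel : ∀ i : Fin (2 * n), (w' i : ℕ) + 1 = (w i.castSucc : ℕ)) :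
    (∀ m : ℕ, ∀ p : Equiv.Perm (Fin (m + 1)), p (Fin.last m) = 0 →
      ∀ p' : Equiv.Perm (Fin m),
        (∀ i : Fin m, (p' i : ℕ) + 1 = (p i.castSucc : ℕ)) →
        (¬ ContainsP w p ↔ ¬ ContainsP w' p')) ∧
    (∀ l : ℕ, ∀ q : Equiv.Perm (Fin (l + 1)), q (Fin.last l) ≠ 0 →
      (¬ ContainsP w q ↔ ¬ ContainsP w' q)) ∧
    (∀ (ι κ : Type) (ms : ι → ℕ) (ls : κ → ℕ)
        (ps : (i : ι) → Equiv.Perm (Fin (ms i + 1)))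
        (_ : ∀ i, ps i (Fin.last (ms i)) = 0)
        (ps' : (i : ι) → Equiv.Perm (Fin (ms i)))
        (_ : ∀ i, ∀ t : Fin (ms i), (ps' i t : ℕ) + 1 = (ps i t.castSucc : ℕ))
        (qs : (j : κ) → Equiv.Perm (Fin (ls j + 1)))
        (_ : ∀ j, qs j (Fin.last (ls j)) ≠ 0),
      Nat.card {v : Equiv.Perm (Fin (2 * n + 1)) //
          Alternating v ∧ Avoids132 v ∧ (∀ i, ¬ ContainsP v (ps i)) ∧
            ∀ j, ¬ ContainsP v (qs j)} =
      Nat.card {v : Equiv.Perm (Fin (2 * n)) //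
          Alternating v ∧ Avoids132 v ∧ (∀ i, ¬ ContainsP v (ps' i)) ∧
            ∀ j, ¬ ContainsP v (qs j)}) := by
  obtain ⟨hwa, hwv⟩ := hw
  refine ⟨?_, ?_, ?_⟩
  · intro m p hp p' hp'
    exact not_congr (S19.contains_p_iff hrel p hp p' hp')
  · intro l q hq
    exact not_congr (S19.contains_q_iff hrel q hq)
  · intro ι κ ms ls ps hps ps' hps' qs hqs
    apply Nat.card_congr
    refine
      { toFun := fun v => ⟨S19.restr v.1 (S19.alt_avoid_last v.1 v.2.1 v.2.2.1), ?_⟩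
        invFun := fun u => ⟨S19.extP u.1, ?_⟩
        left_inv := ?_
        right_inv := ?_ }
    · obtain ⟨v, hva, hvv, hvp, hvq⟩ := v
      have r := S19.restr_rel v (S19.alt_avoid_last v hva hvv)
      exact ⟨(S19.alt_iff r).mp hva, (S19.avoids132_iff r).mp hvv,
        fun i => (not_congr (S19.contains_p_iff r (ps i) (hps i) (ps' i) (hps' i))).mp (hvp i),
        fun j => (not_congr (S19.contains_q_iff r (qs j) (hqs j))).mp (hvq j)⟩
    · obtain ⟨u, hua, huv, hup, huq⟩ := u
      have r := S19.extP_rel u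
      exact ⟨(S19.alt_iff r).mpr hua, (S19.avoids132_iff r).mpr huv,
        fun i => (not_congr (S19.contains_p_iff r (ps i) (hps i) (ps' i) (hps' i))).mpr (hup i),
        fun j => (not_congr (S19.contains_q_iff r (qs j) (hqs j))).mpr (huq j)⟩
    · rintro ⟨v, hv⟩
      exact Subtype.ext (S19.rel_left_unique
        (S19.extP_rel (S19.restr v (S19.alt_avoid_last v hv.1 hv.2.1)))
        (S19.restr_rel v (S19.alt_avoid_last v hv.1 hv.2.1)))
    · rintro ⟨u, hu⟩
      exact Subtype.ext (S19.rel_right_unique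
        (S19.restr_rel (S19.extP u) (S19.rel_last (S19.extP_rel u)))
        (S19.extP_rel u))
end
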